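/- For every (a,ℓ)∈L^∞(0,T;ℝ^{n×n})×L^∞(0,T;ℝⁿ) with mild solution y=S(a,ℓ) and every (δa,δℓ)∈L^∞(0,T;ℝ^{n×n})×L^∞(0,T;ℝⁿ), the linearized integral equation δy(t)=∫₀ᵗ ((t−s)^{γ−1}/Γ(γ)) f'(a(s)y(s)+ℓ(s); a(s)δy(s)+δa(s)y(s)+δℓ(s)) ds, t∈[0,T], admits a unique solution δy∈C([0,T];ℝⁿ). -/

import Mathlib

open MeasureTheory Set Filter Topology

noncomputable section

/-- `ℝⁿ` with the Euclidean norm. -/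
abbrev Vec (n : ℕ) := EuclideanSpace ℝ (Fin n)

/-- `ℝ^{n×n}` with the Frobenius (Euclidean) norm. -/
abbrev Mat (n : ℕ) := EuclideanSpace ℝ ((Fin n) × (Fin n))

/-- Matrix-vector multiplication `A * x`. -/
def mv {n : ℕ} (A : Mat n) (x : Vec n) : Vec n :=
  (WithLp.equiv 2 (Fin n → ℝ)).symm (fun i => ∑ j, A (i, j) * x j)

/-- `y ∈ C([0,T];ℝⁿ)` is a mild solution of the state equation
`∂^γ y = f(a y + ℓ)`, `y(0) = y₀`, i.e. it satisfies the Volterra integral equation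
`y(t) = y₀ + ∫₀ᵗ ((t-s)^(γ-1)/Γ(γ)) f(a(s) y(s) + ℓ(s)) ds` for all `t ∈ [0,T]`. -/
def IsMildSolution {n : ℕ} (γ T : ℝ) (y₀ : Vec n) (f : Vec n → Vec n)
    (a : ℝ → Mat n) (ℓ : ℝ → Vec n) (y : ℝ → Vec n) : Prop :=
  ContinuousOn y (Icc 0 T) ∧
  ∀ t ∈ Icc (0:ℝ) T,
    y t = y₀ + ∫ s in (0:ℝ)..t, ((t - s) ^ (γ - 1) / Real.Gamma γ) • f (mv (a s) (y s) + ℓ s)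

/-- `δy` solves the "linearized" integral equation
`δy(t) = ∫₀ᵗ ((t-s)^(γ-1)/Γ(γ)) f'(a y + ℓ; a δy + δa y + δℓ)(s) ds`, `t ∈ [0,T]`,
where `f' z d` denotes the directional derivative of `f` at `z` in direction `d`. -/
def IsLinSolution {n : ℕ} (γ T : ℝ) (f' : Vec n → Vec n → Vec n)
    (a : ℝ → Mat n) (ℓ : ℝ → Vec n) (y : ℝ → Vec n)
    (δa : ℝ → Mat n) (δℓ : ℝ → Vec n) (δy : ℝ → Vec n) : Prop :=
  ContinuousOn δy (Icc 0 T) ∧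
  ∀ t ∈ Icc (0:ℝ) T,
    δy t = ∫ s in (0:ℝ)..t, ((t - s) ^ (γ - 1) / Real.Gamma γ) •
      f' (mv (a s) (y s) + ℓ s) (mv (a s) (δy s) + mv (δa s) (y s) + δℓ s)


section Aux

open intervalIntegral

lemma mv_sub {n : ℕ} (A : Mat n) (x y : Vec n) : mv A x - mv A y = mv A (x - y) := by
  ext i
  show (∑ j, A (i, j) * x j) - (∑ j, A (i, j) * y j) = ∑ j, A (i, j) * (x j - y j)
  rw [← Finset.sum_sub_distrib]
  exact Finset.sum_congr rfl fun j _ => (mul_sub _ _ _).symm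

lemma mv_norm_le {n : ℕ} (A : Mat n) (x : Vec n) : ‖mv A x‖ ≤ ‖A‖ * ‖x‖ := by
  have hA : ‖A‖ ^ 2 = ∑ p : (Fin n) × (Fin n), (A p) ^ 2 := by
    rw [EuclideanSpace.norm_eq, Real.sq_sqrt (by positivity)]
    simp [sq_abs]
  have hx : ‖x‖ ^ 2 = ∑ j, (x j) ^ 2 := by
    rw [EuclideanSpace.norm_eq, Real.sq_sqrt (by positivity)]
    simp [sq_abs]
  have hm : ‖mv A x‖ ^ 2 ≤ (‖A‖ * ‖x‖) ^ 2 := by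
    have h1 : ‖mv A x‖ ^ 2 = ∑ i, (∑ j, A (i, j) * x j) ^ 2 := by
      rw [EuclideanSpace.norm_eq, Real.sq_sqrt (by positivity)]
      simp [mv, sq_abs]
    rw [h1, mul_pow, hA, hx]
    calc ∑ i, (∑ j, A (i, j) * x j) ^ 2
        ≤ ∑ i, (∑ j, (A (i, j)) ^ 2) * (∑ j, (x j) ^ 2) := by
          refine Finset.sum_le_sum fun i _ => ?_
          exact Finset.sum_mul_sq_le_sq_mul_sq _ _ _
      _ = (∑ p : (Fin n) × (Fin n), (A p) ^ 2) * (∑ j, (x j) ^ 2) := by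
          rw [← Finset.sum_mul, Fintype.sum_prod_type]
  calc ‖mv A x‖ = √(‖mv A x‖ ^ 2) := (Real.sqrt_sq (norm_nonneg _)).symm
    _ ≤ √((‖A‖ * ‖x‖) ^ 2) := Real.sqrt_le_sqrt hm
    _ = ‖A‖ * ‖x‖ := Real.sqrt_sq (by positivity)

lemma continuous_mv {n : ℕ} : Continuous (fun p : Mat n × Vec n => mv p.1 p.2) := by
  refine (PiLp.continuous_toLp 2 (fun _ : Fin n => ℝ)).comp ?_
  refine continuous_pi fun i => ?_
  refine continuous_finset_sum _ fun j _ => Continuous.mul ?_ ?_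
  · exact (continuous_apply (i, j)).comp
      ((PiLp.continuous_ofLp 2 (fun _ : (Fin n) × (Fin n) => ℝ)).comp continuous_fst)
  · exact (continuous_apply j).comp
      ((PiLp.continuous_ofLp 2 (fun _ : Fin n => ℝ)).comp continuous_snd)

lemma ker_intble {γ : ℝ} (hγ0 : 0 < γ) {a b c : ℝ} :
    IntervalIntegrable (fun s => (c - s) ^ (γ - 1)) volume a b := by
  have h := (intervalIntegrable_rpow' (a := c - a) (b := c - b)
    (by linarith : (-1:ℝ) < γ - 1)).comp_sub_left c
  simpa using h

lemma ker_integral {γ : ℝ} (hγ0 : 0 < γ) {a b c : ℝ} :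
    ∫ s in a..b, (c - s) ^ (γ - 1) = ((c - a) ^ γ - (c - b) ^ γ) / γ := by
  rw [intervalIntegral.integral_comp_sub_left (fun x => x ^ (γ - 1)) c,
    integral_rpow (Or.inl (by linarith : (-1:ℝ) < γ - 1))]
  rw [show γ - 1 + 1 = γ by ring]

lemma norm_int_le {F : Type*} [NormedAddCommGroup F] [NormedSpace ℝ F] {a b : ℝ} (hab : a ≤ b)
    {Φ : ℝ → F} {h : ℝ → ℝ}
    (hΦ : IntegrableOn Φ (Ioc a b)) (hh : IntegrableOn h (Ioc a b))
    (hb : ∀ s ∈ Ioo a b, ‖Φ s‖ ≤ h s) :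
    ‖∫ s in a..b, Φ s‖ ≤ ∫ s in a..b, h s := by
  rw [intervalIntegral.integral_of_le hab, intervalIntegral.integral_of_le hab,
    integral_Ioc_eq_integral_Ioo, integral_Ioc_eq_integral_Ioo]
  refine le_trans (norm_integral_le_integral_norm _) ?_
  exact setIntegral_mono_on (IntegrableOn.mono_set hΦ.norm Ioo_subset_Ioc_self)
    (IntegrableOn.mono_set hh Ioo_subset_Ioc_self) measurableSet_Ioo hb

lemma abel_intbleOn {F : Type*} [NormedAddCommGroup F] [NormedSpace ℝ F]
    {γ : ℝ} (hγ0 : 0 < γ) {a b M : ℝ} (hab : a ≤ b) {g : ℝ → F}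
    (hg : AEStronglyMeasurable g (volume.restrict (Ioc a b)))
    (hgb : ∀ s ∈ Ioc a b, ‖g s‖ ≤ M) :
    IntervalIntegrable (fun s => (b - s) ^ (γ - 1) • g s) volume a b := by
  rw [intervalIntegrable_iff, uIoc_of_le hab]
  have hker : IntegrableOn (fun s => (b - s) ^ (γ - 1)) (Ioc a b) := by
    rw [← uIoc_of_le hab, ← intervalIntegrable_iff]; exact ker_intble hγ0
  refine Integrable.mono' (hker.const_mul (max M 0)) ?_ ?_
  · exact (((measurable_const.sub measurable_id).pow_const _).aestronglyMeasurable).smul hg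
  · refine (ae_restrict_iff' measurableSet_Ioc).mpr (ae_of_all _ fun s hs => ?_)
    rw [norm_smul, Real.norm_eq_abs, abs_of_nonneg (Real.rpow_nonneg (by linarith [hs.2]) _)]
    rw [mul_comm (max M 0)]
    refine mul_le_mul_of_nonneg_left ((hgb s hs).trans (le_max_left _ _))
      (Real.rpow_nonneg (by linarith [hs.2]) _)

lemma exp_ker_int {γ lam t : ℝ} (hγ0 : 0 < γ) (hlam : 0 < lam) (ht : 0 ≤ t) :
    ∫ s in (0:ℝ)..t, (t - s) ^ (γ - 1) * Real.exp (lam * (s - t)) ≤ Real.Gamma γ / lam ^ γ := by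
  have hfun : (fun s => (t - s) ^ (γ - 1) * Real.exp (lam * (s - t)))
      = fun s => (fun u => u ^ (γ - 1) * Real.exp (-(lam * u))) (t - s) := by
    funext s
    rw [show lam * (s - t) = -(lam * (t - s)) by ring]
  rw [hfun, intervalIntegral.integral_comp_sub_left (fun u => u ^ (γ - 1) * Real.exp (-(lam * u))) t]
  rw [sub_self, sub_zero, intervalIntegral.integral_of_le ht]
  have hint : IntegrableOn (fun u : ℝ => u ^ (γ - 1) * Real.exp (-(lam * u))) (Ioi 0) := by
    have h := integrableOn_rpow_mul_exp_neg_mul_rpow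
      (by linarith : (-1:ℝ) < γ - 1) (zero_lt_one' ℝ) hlam
    simpa [Real.rpow_one, neg_mul] using h
  calc ∫ u in Ioc 0 t, u ^ (γ - 1) * Real.exp (-(lam * u))
      ≤ ∫ u in Ioi 0, u ^ (γ - 1) * Real.exp (-(lam * u)) := by
        refine setIntegral_mono_set hint ?_ (HasSubset.Subset.eventuallyLE Ioc_subset_Ioi_self)
        refine (ae_restrict_iff' measurableSet_Ioi).mpr (ae_of_all _ fun u hu => ?_)
        have : (0:ℝ) ≤ u := le_of_lt hu
        positivity
    _ = (1 / lam) ^ γ * Real.Gamma γ := Real.integral_rpow_mul_exp_neg_mul_Ioi hγ0 hlam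
    _ = Real.Gamma γ / lam ^ γ := by
        rw [Real.div_rpow zero_le_one hlam.le, Real.one_rpow]
        ring

lemma cont_of_holder {F : Type*} [NormedAddCommGroup F] {f : ℝ → F} {c γ T : ℝ}
    (hγ0 : 0 < γ) (hc : 0 ≤ c)
    (h : ∀ t ∈ Icc (0:ℝ) T, ∀ t' ∈ Icc (0:ℝ) T, t ≤ t' → ‖f t' - f t‖ ≤ c * (t' - t) ^ γ) :
    ContinuousOn f (Icc 0 T) := by
  rw [Metric.continuousOn_iff]
  intro t ht ε hε
  refine ⟨(ε / (c + 1)) ^ γ⁻¹, Real.rpow_pos_of_pos (by positivity) _, fun t' ht' hd => ?_⟩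
  have key : ∀ u ∈ Icc (0:ℝ) T, ∀ v ∈ Icc (0:ℝ) T, u ≤ v → dist v u < (ε / (c + 1)) ^ γ⁻¹ →
      dist (f v) (f u) < ε := by
    intro u hu v hv huv hdist
    rw [dist_eq_norm]
    refine lt_of_le_of_lt (h u hu v hv huv) ?_
    have h1 : (v - u) ^ γ ≤ ((ε / (c + 1)) ^ γ⁻¹) ^ γ := by
      refine Real.rpow_le_rpow (by linarith) ?_ hγ0.le
      have := hdist
      rw [Real.dist_eq, abs_of_nonneg (by linarith)] at this
      exact this.le
    have h2 : ((ε / (c + 1)) ^ γ⁻¹) ^ γ = ε / (c + 1) := by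
      rw [← Real.rpow_mul (by positivity), inv_mul_cancel₀ hγ0.ne', Real.rpow_one]
    calc c * (v - u) ^ γ ≤ c * (ε / (c + 1)) := by
          refine mul_le_mul_of_nonneg_left ?_ hc
          rw [← h2]; exact h1
      _ < ε := by
          calc c * (ε / (c + 1)) < (c + 1) * (ε / (c + 1)) :=
                mul_lt_mul_of_pos_right (by linarith) (by positivity)
            _ = ε := by field_simp
  rcases le_total t t' with hle | hle
  · exact key t ht t' ht' hle hd
  · rw [dist_comm]; exact key t' ht' t ht hle (by rwa [dist_comm])

lemma abel_cont {F : Type*} [NormedAddCommGroup F] [NormedSpace ℝ F] [CompleteSpace F]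
    {γ T : ℝ} (hγ0 : 0 < γ) (hγ1 : γ < 1) {M : ℝ} {g : ℝ → F}
    (hgm : AEStronglyMeasurable g (volume.restrict (Ioc 0 T)))
    (hgb : ∀ s ∈ Ioc (0:ℝ) T, ‖g s‖ ≤ M) :
    ContinuousOn (fun t => ∫ s in (0:ℝ)..t, ((t - s) ^ (γ - 1)) • g s) (Icc 0 T) := by
  set M' := max M 0 with hM'
  have hM0 : (0:ℝ) ≤ M' := le_max_right _ _
  have hgb' : ∀ s ∈ Ioc (0:ℝ) T, ‖g s‖ ≤ M' := fun s hs => (hgb s hs).trans (le_max_left _ _)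
  refine cont_of_holder hγ0 (by positivity : (0:ℝ) ≤ 2 * M' / γ) ?_
  intro t ht t' ht' htt'
  have ht0 : (0:ℝ) ≤ t := ht.1
  have ht0' : (0:ℝ) ≤ t' := ht'.1
  have hsub : Ioc (0:ℝ) t' ⊆ Ioc 0 T := Ioc_subset_Ioc_right ht'.2
  have hsub2 : Ioc (0:ℝ) t ⊆ Ioc 0 T := Ioc_subset_Ioc_right ht.2
  have hgm1 : AEStronglyMeasurable g (volume.restrict (Ioc 0 t')) :=
    hgm.mono_measure (Measure.restrict_mono hsub le_rfl)
  have hgm2 : AEStronglyMeasurable g (volume.restrict (Ioc 0 t)) :=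
    hgm.mono_measure (Measure.restrict_mono hsub2 le_rfl)
  have A1 : IntervalIntegrable (fun s => (t' - s) ^ (γ - 1) • g s) volume 0 t' :=
    abel_intbleOn hγ0 ht0' hgm1 (fun s hs => hgb' s (hsub hs))
  have A1a : IntervalIntegrable (fun s => (t' - s) ^ (γ - 1) • g s) volume 0 t :=
    A1.mono_set (by rw [uIcc_of_le ht0, uIcc_of_le ht0']; exact Icc_subset_Icc_right htt')
  have A1b : IntervalIntegrable (fun s => (t' - s) ^ (γ - 1) • g s) volume t t' :=
    A1.mono_set (by rw [uIcc_of_le htt', uIcc_of_le ht0']; exact Icc_subset_Icc_left ht0)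
  have A3 : IntervalIntegrable (fun s => (t - s) ^ (γ - 1) • g s) volume 0 t :=
    abel_intbleOn hγ0 ht0 hgm2 (fun s hs => hgb' s (hsub2 hs))
  have hsplit : (∫ s in (0:ℝ)..t', (t' - s) ^ (γ - 1) • g s)
      - (∫ s in (0:ℝ)..t, (t - s) ^ (γ - 1) • g s)
      = (∫ s in (0:ℝ)..t, ((t' - s) ^ (γ - 1) • g s - (t - s) ^ (γ - 1) • g s))
        + ∫ s in t..t', (t' - s) ^ (γ - 1) • g s := by
    rw [← intervalIntegral.integral_add_adjacent_intervals A1a A1b,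
      intervalIntegral.integral_sub A1a A3]
    abel
  show ‖(∫ s in (0:ℝ)..t', (t' - s) ^ (γ - 1) • g s)
      - ∫ s in (0:ℝ)..t, (t - s) ^ (γ - 1) • g s‖ ≤ 2 * M' / γ * (t' - t) ^ γ
  rw [hsplit]
  have K2 : IntervalIntegrable (fun s => (t' - s) ^ (γ - 1)) volume 0 t := ker_intble hγ0
  have K3 : IntervalIntegrable (fun s => (t - s) ^ (γ - 1)) volume 0 t := ker_intble hγ0
  have N1 : ‖∫ s in (0:ℝ)..t, ((t' - s) ^ (γ - 1) • g s - (t - s) ^ (γ - 1) • g s)‖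
      ≤ ∫ s in (0:ℝ)..t, M' * ((t - s) ^ (γ - 1) - (t' - s) ^ (γ - 1)) := by
    refine norm_int_le ht0 ?_ ?_ ?_
    · have h1 := (intervalIntegrable_iff.mp A1a); rw [uIoc_of_le ht0] at h1
      have h2 := (intervalIntegrable_iff.mp A3); rw [uIoc_of_le ht0] at h2
      exact h1.sub h2
    · have h1 := (intervalIntegrable_iff.mp K3); rw [uIoc_of_le ht0] at h1
      have h2 := (intervalIntegrable_iff.mp K2); rw [uIoc_of_le ht0] at h2
      exact (h1.sub h2).const_mul M'
    · intro s hs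
      have hts : (0:ℝ) < t - s := by linarith [hs.2]
      have hts' : t - s ≤ t' - s := by linarith
      have hker : (t' - s) ^ (γ - 1) ≤ (t - s) ^ (γ - 1) :=
        Real.rpow_le_rpow_of_nonpos hts hts' (by linarith)
      rw [← sub_smul, norm_smul, Real.norm_eq_abs, abs_of_nonpos (by linarith)]
      rw [neg_sub, mul_comm M']
      refine mul_le_mul_of_nonneg_left ?_ (by linarith)
      exact hgb' s (hsub2 ⟨hs.1, hs.2.le⟩)
  have N2 : ‖∫ s in t..t', (t' - s) ^ (γ - 1) • g s‖
      ≤ ∫ s in t..t', M' * (t' - s) ^ (γ - 1) := by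
    refine norm_int_le htt' ?_ ?_ ?_
    · have h1 := (intervalIntegrable_iff.mp A1b); rw [uIoc_of_le htt'] at h1
      exact h1
    · have h1 := (intervalIntegrable_iff.mp (ker_intble hγ0 (a := t) (b := t') (c := t')))
      rw [uIoc_of_le htt'] at h1
      exact h1.const_mul M'
    · intro s hs
      have hts : (0:ℝ) ≤ t' - s := by linarith [hs.2]
      rw [norm_smul, Real.norm_eq_abs, abs_of_nonneg (Real.rpow_nonneg hts _), mul_comm M']
      refine mul_le_mul_of_nonneg_left ?_ (Real.rpow_nonneg hts _)
      exact hgb' s (hsub ⟨lt_of_le_of_lt ht0 hs.1, hs.2.le⟩)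
  have V1 : ∫ s in (0:ℝ)..t, M' * ((t - s) ^ (γ - 1) - (t' - s) ^ (γ - 1))
      = M' * ((t ^ γ - 0 ^ γ) / γ - ((t' ^ γ - (t' - t) ^ γ) / γ)) := by
    rw [intervalIntegral.integral_const_mul, intervalIntegral.integral_sub K3 K2,
      ker_integral hγ0, ker_integral hγ0]
    rw [sub_zero, sub_self, sub_zero]
  have V2 : ∫ s in t..t', M' * (t' - s) ^ (γ - 1) = M' * (((t' - t) ^ γ - 0 ^ γ) / γ) := by
    rw [intervalIntegral.integral_const_mul, ker_integral hγ0, sub_self]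
  have h0γ : (0:ℝ) ^ γ = 0 := Real.zero_rpow hγ0.ne'
  have hmono : t ^ γ ≤ t' ^ γ := Real.rpow_le_rpow ht0 htt' hγ0.le
  have hnn : (0:ℝ) ≤ (t' - t) ^ γ := Real.rpow_nonneg (by linarith) _
  calc ‖(∫ s in (0:ℝ)..t, ((t' - s) ^ (γ - 1) • g s - (t - s) ^ (γ - 1) • g s))
        + ∫ s in t..t', (t' - s) ^ (γ - 1) • g s‖
      ≤ ‖∫ s in (0:ℝ)..t, ((t' - s) ^ (γ - 1) • g s - (t - s) ^ (γ - 1) • g s)‖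
        + ‖∫ s in t..t', (t' - s) ^ (γ - 1) • g s‖ := norm_add_le _ _
    _ ≤ (∫ s in (0:ℝ)..t, M' * ((t - s) ^ (γ - 1) - (t' - s) ^ (γ - 1)))
        + ∫ s in t..t', M' * (t' - s) ^ (γ - 1) := add_le_add N1 N2
    _ ≤ 2 * M' / γ * (t' - t) ^ γ := by
        rw [V1, V2, h0γ, sub_zero, sub_zero]
        calc M' * (t ^ γ / γ - (t' ^ γ - (t' - t) ^ γ) / γ) + M' * ((t' - t) ^ γ / γ)
            = M' * ((t ^ γ - (t' ^ γ - (t' - t) ^ γ) + (t' - t) ^ γ) / γ) := by ring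
          _ ≤ M' * (2 * (t' - t) ^ γ / γ) := by
              refine mul_le_mul_of_nonneg_left ?_ hM0
              gcongr
              linarith
          _ = 2 * M' / γ * (t' - t) ^ γ := by ring


section fprime
variable {n : ℕ} {L : ℝ} {f : Vec n → Vec n} {f' : Vec n → Vec n → Vec n}

lemma fp_lip (hf : ∀ z₁ z₂ : Vec n, ‖f z₁ - f z₂‖ ≤ L * ‖z₁ - z₂‖)
    (hf' : ∀ z d : Vec n,
      Tendsto (fun τ : ℝ => τ⁻¹ • (f (z + τ • d) - f z)) (𝓝[>] 0) (𝓝 (f' z d)))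
    (z d₁ d₂ : Vec n) : ‖f' z d₁ - f' z d₂‖ ≤ L * ‖d₁ - d₂‖ := by
  have h := ((hf' z d₁).sub (hf' z d₂)).norm
  refine le_of_tendsto h ?_
  filter_upwards [self_mem_nhdsWithin] with τ hτ
  have hτ0 : (0:ℝ) < τ := hτ
  have heq : τ⁻¹ • (f (z + τ • d₁) - f z) - τ⁻¹ • (f (z + τ • d₂) - f z)
      = τ⁻¹ • (f (z + τ • d₁) - f (z + τ • d₂)) := by
    rw [← smul_sub]; congr 1; abel
  rw [heq, norm_smul, Real.norm_eq_abs, abs_of_pos (inv_pos.mpr hτ0)]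
  have hb := hf (z + τ • d₁) (z + τ • d₂)
  have harg : (z + τ • d₁) - (z + τ • d₂) = τ • (d₁ - d₂) := by rw [smul_sub]; abel
  rw [harg, norm_smul, Real.norm_eq_abs, abs_of_pos hτ0] at hb
  calc τ⁻¹ * ‖f (z + τ • d₁) - f (z + τ • d₂)‖ ≤ τ⁻¹ * (L * (τ * ‖d₁ - d₂‖)) :=
        mul_le_mul_of_nonneg_left hb (by positivity)
    _ = L * ‖d₁ - d₂‖ := by field_simp

lemma fp_bound (hf : ∀ z₁ z₂ : Vec n, ‖f z₁ - f z₂‖ ≤ L * ‖z₁ - z₂‖)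
    (hf' : ∀ z d : Vec n,
      Tendsto (fun τ : ℝ => τ⁻¹ • (f (z + τ • d) - f z)) (𝓝[>] 0) (𝓝 (f' z d)))
    (z d : Vec n) : ‖f' z d‖ ≤ L * ‖d‖ := by
  have h := (hf' z d).norm
  refine le_of_tendsto h ?_
  filter_upwards [self_mem_nhdsWithin] with τ hτ
  have hτ0 : (0:ℝ) < τ := hτ
  rw [norm_smul, Real.norm_eq_abs, abs_of_pos (inv_pos.mpr hτ0)]
  have hb := hf (z + τ • d) z
  have harg : (z + τ • d) - z = τ • d := by abel
  rw [harg, norm_smul, Real.norm_eq_abs, abs_of_pos hτ0] at hb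
  calc τ⁻¹ * ‖f (z + τ • d) - f z‖ ≤ τ⁻¹ * (L * (τ * ‖d‖)) :=
        mul_le_mul_of_nonneg_left hb (by positivity)
    _ = L * ‖d‖ := by field_simp

lemma fp_meas (hf : ∀ z₁ z₂ : Vec n, ‖f z₁ - f z₂‖ ≤ L * ‖z₁ - z₂‖)
    (hf' : ∀ z d : Vec n,
      Tendsto (fun τ : ℝ => τ⁻¹ • (f (z + τ • d) - f z)) (𝓝[>] 0) (𝓝 (f' z d))) :
    Measurable (fun p : Vec n × Vec n => f' p.1 p.2) := by
  have hfc : Continuous f := by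
    have : LipschitzWith (Real.toNNReal L) f := by
      refine LipschitzWith.of_dist_le_mul fun x y => ?_
      rw [dist_eq_norm, dist_eq_norm]
      exact (hf x y).trans (mul_le_mul_of_nonneg_right
        (Real.le_coe_toNNReal L) (norm_nonneg _))
    exact this.continuous
  set τ : ℕ → ℝ := fun k => ((k:ℝ) + 1)⁻¹ with hτdef
  have htau : Tendsto τ atTop (𝓝[>] (0:ℝ)) := by
    refine tendsto_nhdsWithin_of_tendsto_nhds_of_eventually_within _ ?_
      (Eventually.of_forall fun k => mem_Ioi.mpr (by positivity))
    have := tendsto_one_div_add_atTop_nhds_zero_nat (𝕜 := ℝ)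
    simpa [one_div] using this
  refine measurable_of_tendsto_metrizable
    (f := fun k (p : Vec n × Vec n) => (τ k)⁻¹ • (f (p.1 + τ k • p.2) - f p.1)) ?_ ?_
  · intro k
    refine Continuous.measurable ?_
    exact ((continuous_const : Continuous fun _ : Vec n × Vec n => (τ k)⁻¹).smul ((hfc.comp (continuous_fst.add
      ((continuous_const : Continuous fun _ : Vec n × Vec n => τ k).smul continuous_snd))).sub (hfc.comp continuous_fst)))
  · rw [tendsto_pi_nhds]
    intro p
    exact (hf' p.1 p.2).comp htau

end fprime

end Aux

set_option maxHeartbeats 1000000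

/-- For every `(a,ℓ) ∈ L^∞` with mild solution `y = S(a,ℓ)` and every
direction `(δa,δℓ) ∈ L^∞`, the linearized integral equation admits a unique solution
`δy ∈ C([0,T];ℝⁿ)`. -/
theorem stmt_5 {n : ℕ} (γ T L : ℝ) (hγ : γ ∈ Ioo (0:ℝ) 1) (hT : 0 < T) (hL : 0 < L)
    (y₀ : Vec n) (f : Vec n → Vec n) (f' : Vec n → Vec n → Vec n)
    (hf : ∀ z₁ z₂ : Vec n, ‖f z₁ - f z₂‖ ≤ L * ‖z₁ - z₂‖)
    (hf' : ∀ z d : Vec n,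
      Tendsto (fun τ : ℝ => τ⁻¹ • (f (z + τ • d) - f z)) (𝓝[>] 0) (𝓝 (f' z d)))
    (a δa : ℝ → Mat n) (ℓ δℓ : ℝ → Vec n)
    (ha : Measurable a) (hℓ : Measurable ℓ) (hδa : Measurable δa) (hδℓ : Measurable δℓ)
    (hbd : ∃ C : ℝ, ∀ t ∈ Icc (0:ℝ) T, ‖a t‖ ≤ C ∧ ‖ℓ t‖ ≤ C ∧ ‖δa t‖ ≤ C ∧ ‖δℓ t‖ ≤ C)
    (y : ℝ → Vec n) (hy : IsMildSolution γ T y₀ f a ℓ y) :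
    ∃ δy : ℝ → Vec n, IsLinSolution γ T f' a ℓ y δa δℓ δy ∧
      ∀ δz : ℝ → Vec n, IsLinSolution γ T f' a ℓ y δa δℓ δz →
        ∀ t ∈ Icc (0:ℝ) T, δz t = δy t := by
  obtain ⟨hγ0, hγ1⟩ := hγ
  have hT' : (0:ℝ) ≤ T := hT.le
  obtain ⟨C₀, hC₀⟩ := hbd
  have hC00 : (0:ℝ) ≤ C₀ :=
    le_trans (norm_nonneg _) (hC₀ 0 (by constructor <;> linarith)).1
  obtain ⟨hycont, _hyeq⟩ := hy
  obtain ⟨Cy, hCy⟩ := isCompact_Icc.exists_bound_of_continuousOn hycont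
  set G := Real.Gamma γ with hGdef
  have hG : 0 < G := Real.Gamma_pos_of_pos hγ0
  set K : ℝ := L * C₀ with hKdef
  have hK0 : 0 ≤ K := mul_nonneg hL.le hC00
  set lam : ℝ := (2 * K + 1) ^ γ⁻¹ with hlamdef
  have hlam : 0 < lam := Real.rpow_pos_of_pos (by linarith) _
  have hlamγ : lam ^ γ = 2 * K + 1 := by
    rw [hlamdef, ← Real.rpow_mul (by linarith), inv_mul_cancel₀ hγ0.ne', Real.rpow_one]
  -- measurability data
  have hy_ae : AEMeasurable y (volume.restrict (Ioc (0:ℝ) T)) :=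
    (hycont.mono Ioc_subset_Icc_self).aemeasurable measurableSet_Ioc
  have hZ_ae : AEMeasurable (fun s => mv (a s) (y s) + ℓ s) (volume.restrict (Ioc (0:ℝ) T)) :=
    (continuous_mv.measurable.comp_aemeasurable
      (ha.aemeasurable.prodMk hy_ae)).add hℓ.aemeasurable
  have hB_ae : AEMeasurable (fun s => mv (δa s) (y s)) (volume.restrict (Ioc (0:ℝ) T)) :=
    continuous_mv.measurable.comp_aemeasurable (hδa.aemeasurable.prodMk hy_ae)
  have hf'm := fp_meas hf hf'
  have hf'lip := fp_lip hf hf'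
  have hf'b := fp_bound hf hf'
  haveI : CompactSpace (Set.Icc (0:ℝ) T) := isCompact_iff_compactSpace.mp isCompact_Icc
  haveI : Nonempty C(Set.Icc (0:ℝ) T, Vec n) := ⟨ContinuousMap.const _ 0⟩
  -- the integrand map
  set g : C(Set.Icc (0:ℝ) T, Vec n) → ℝ → Vec n := fun u s =>
    G⁻¹ • f' (mv (a s) (y s) + ℓ s)
      (mv (a s) (Real.exp (lam * s) • u (projIcc 0 T hT' s)) + mv (δa s) (y s) + δℓ s)
    with hgdef
  have hg_meas : ∀ u, AEStronglyMeasurable (g u) (volume.restrict (Ioc (0:ℝ) T)) := by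
    intro u
    have hucont : Continuous (fun s : ℝ => Real.exp (lam * s) • u (projIcc 0 T hT' s)) :=
      (Real.continuous_exp.comp (continuous_const.mul continuous_id)).smul
        (u.continuous.comp continuous_projIcc)
    have hD_ae : AEMeasurable (fun s =>
        mv (a s) (Real.exp (lam * s) • u (projIcc 0 T hT' s)) + mv (δa s) (y s) + δℓ s)
        (volume.restrict (Ioc (0:ℝ) T)) :=
      ((continuous_mv.measurable.comp_aemeasurable
        (ha.aemeasurable.prodMk hucont.measurable.aemeasurable)).add hB_ae).add hδℓ.aemeasurable
    exact ((hf'm.comp_aemeasurable (hZ_ae.prodMk hD_ae)).aestronglyMeasurable).const_smul G⁻¹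
  have hg_bd : ∀ u : C(Set.Icc (0:ℝ) T, Vec n), ∀ s ∈ Ioc (0:ℝ) T,
      ‖g u s‖ ≤ G⁻¹ * (L * (C₀ * (Real.exp (lam * T) * ‖u‖) + (C₀ * Cy + C₀))) := by
    intro u s hs
    have hsIcc : s ∈ Icc (0:ℝ) T := ⟨hs.1.le, hs.2⟩
    obtain ⟨haC, hℓC, hδaC, hδℓC⟩ := hC₀ s hsIcc
    rw [hgdef]
    simp only [norm_smul, Real.norm_eq_abs, abs_of_pos (inv_pos.mpr hG)]
    refine mul_le_mul_of_nonneg_left ?_ (inv_pos.mpr hG).le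
    refine le_trans (hf'b _ _) (mul_le_mul_of_nonneg_left ?_ hL.le)
    have h1 : ‖mv (a s) (Real.exp (lam * s) • u (projIcc 0 T hT' s))‖
        ≤ C₀ * (Real.exp (lam * T) * ‖u‖) := by
      refine le_trans (mv_norm_le _ _) ?_
      refine mul_le_mul haC ?_ (norm_nonneg _) hC00
      rw [norm_smul, Real.norm_eq_abs, abs_of_pos (Real.exp_pos _)]
      refine mul_le_mul (Real.exp_le_exp.mpr
        (mul_le_mul_of_nonneg_left hs.2 hlam.le)) (ContinuousMap.norm_coe_le_norm u _)
        (norm_nonneg _) (Real.exp_pos _).le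
    have h2 : ‖mv (δa s) (y s)‖ ≤ C₀ * Cy := by
      refine le_trans (mv_norm_le _ _) (mul_le_mul hδaC (hCy s hsIcc) (norm_nonneg _) hC00)
    calc ‖mv (a s) (Real.exp (lam * s) • u (projIcc 0 T hT' s)) + mv (δa s) (y s) + δℓ s‖
        ≤ ‖mv (a s) (Real.exp (lam * s) • u (projIcc 0 T hT' s)) + mv (δa s) (y s)‖ + ‖δℓ s‖ :=
          norm_add_le _ _
      _ ≤ (‖mv (a s) (Real.exp (lam * s) • u (projIcc 0 T hT' s))‖ + ‖mv (δa s) (y s)‖) + ‖δℓ s‖ :=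
          add_le_add_left (norm_add_le _ _) _
      _ ≤ C₀ * (Real.exp (lam * T) * ‖u‖) + (C₀ * Cy + C₀) := by
          have := add_le_add (add_le_add h1 h2) hδℓC
          linarith
  -- the Volterra operator (exponentially conjugated)
  have hIcont : ∀ u : C(Set.Icc (0:ℝ) T, Vec n),
      ContinuousOn (fun t => ∫ s in (0:ℝ)..t, ((t - s) ^ (γ - 1)) • g u s) (Icc 0 T) :=
    fun u => abel_cont hγ0 hγ1 (hg_meas u) (hg_bd u)
  set Φ : C(Set.Icc (0:ℝ) T, Vec n) → C(Set.Icc (0:ℝ) T, Vec n) := fun u =>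
    ⟨fun t => Real.exp (-(lam * ↑t)) • ∫ s in (0:ℝ)..(t:ℝ), ((↑t - s) ^ (γ - 1)) • g u s,
      (Real.continuous_exp.comp (continuous_const.mul continuous_subtype_val).neg).smul
        (ContinuousOn.restrict (hIcont u))⟩ with hΦdef
  have hIntu : ∀ (u : C(Set.Icc (0:ℝ) T, Vec n)) (t : ℝ), t ∈ Icc (0:ℝ) T →
      IntervalIntegrable (fun s => ((t - s) ^ (γ - 1)) • g u s) volume 0 t := by
    intro u t ht
    exact abel_intbleOn hγ0 ht.1
      ((hg_meas u).mono_measure (Measure.restrict_mono (Ioc_subset_Ioc_right ht.2) le_rfl))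
      (fun s hs => hg_bd u s (Ioc_subset_Ioc_right ht.2 hs))
  -- contraction estimate
  have hΦdist : ∀ u v, dist (Φ u) (Φ v) ≤ 2⁻¹ * dist u v := by
    intro u v
    refine (ContinuousMap.dist_le (by positivity)).mpr ?_
    intro t
    have ht₀ : (t:ℝ) ∈ Icc (0:ℝ) T := t.2
    rw [dist_eq_norm]
    have hdiff : Φ u t - Φ v t = Real.exp (-(lam * ↑t)) •
        ∫ s in (0:ℝ)..(t:ℝ), ((↑t - s) ^ (γ - 1) • g u s - (↑t - s) ^ (γ - 1) • g v s) := by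
      rw [intervalIntegral.integral_sub (hIntu u ↑t ht₀) (hIntu v ↑t ht₀), smul_sub]
      rfl
    rw [hdiff, norm_smul, Real.norm_eq_abs, abs_of_pos (Real.exp_pos _)]
    have hb : ‖∫ s in (0:ℝ)..(t:ℝ), ((↑t - s) ^ (γ - 1) • g u s - (↑t - s) ^ (γ - 1) • g v s)‖
        ≤ ∫ s in (0:ℝ)..(t:ℝ), (K / G * dist u v) * ((↑t - s) ^ (γ - 1) * Real.exp (lam * s)) := by
      refine norm_int_le ht₀.1 ?_ ?_ ?_
      · have h1 := intervalIntegrable_iff.mp (hIntu u ↑t ht₀)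
        have h2 := intervalIntegrable_iff.mp (hIntu v ↑t ht₀)
        rw [uIoc_of_le ht₀.1] at h1 h2
        exact h1.sub h2
      · have h3 : IntervalIntegrable (fun s => ((↑t:ℝ) - s) ^ (γ - 1) • Real.exp (lam * s))
            volume 0 ↑t := by
          refine abel_intbleOn (M := Real.exp (lam * T)) hγ0 ht₀.1 ?_ ?_
          · exact (Real.continuous_exp.comp (continuous_const.mul continuous_id)).aestronglyMeasurable
          · intro s hs
            rw [Real.norm_eq_abs, abs_of_pos (Real.exp_pos _)]
            exact Real.exp_le_exp.mpr (mul_le_mul_of_nonneg_left (hs.2.trans ht₀.2) hlam.le)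
        have h4 := intervalIntegrable_iff.mp h3
        rw [uIoc_of_le ht₀.1] at h4
        have h5 := h4.const_mul (K / G * dist u v)
        simpa [smul_eq_mul, IntegrableOn] using h5
      · intro s hs
        have hsT : s ∈ Icc (0:ℝ) T := ⟨hs.1.le, hs.2.le.trans ht₀.2⟩
        have hker : (0:ℝ) ≤ (↑t - s) ^ (γ - 1) := Real.rpow_nonneg (by linarith [hs.2]) _
        rw [← smul_sub, norm_smul, Real.norm_eq_abs, abs_of_nonneg hker]
        have hgd : ‖g u s - g v s‖ ≤ G⁻¹ * (L * (C₀ * (Real.exp (lam * s) * dist u v))) := by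
          rw [hgdef]
          simp only
          rw [← smul_sub, norm_smul, Real.norm_eq_abs, abs_of_pos (inv_pos.mpr hG)]
          refine mul_le_mul_of_nonneg_left ?_ (inv_pos.mpr hG).le
          refine le_trans (hf'lip _ _ _) (mul_le_mul_of_nonneg_left ?_ hL.le)
          have harg : (mv (a s) (Real.exp (lam * s) • u (projIcc 0 T hT' s))
                + mv (δa s) (y s) + δℓ s)
              - (mv (a s) (Real.exp (lam * s) • v (projIcc 0 T hT' s))
                + mv (δa s) (y s) + δℓ s)
              = mv (a s) (Real.exp (lam * s) •
                  (u (projIcc 0 T hT' s) - v (projIcc 0 T hT' s))) := by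
            rw [smul_sub, ← mv_sub]
            abel
          rw [harg]
          refine le_trans (mv_norm_le _ _) ?_
          rw [norm_smul, Real.norm_eq_abs, abs_of_pos (Real.exp_pos _)]
          refine mul_le_mul (hC₀ s hsT).1 ?_ (by positivity) hC00
          refine mul_le_mul_of_nonneg_left ?_ (Real.exp_pos _).le
          rw [← dist_eq_norm]
          exact ContinuousMap.dist_apply_le_dist _
        calc (↑t - s) ^ (γ - 1) * ‖g u s - g v s‖
            ≤ (↑t - s) ^ (γ - 1) * (G⁻¹ * (L * (C₀ * (Real.exp (lam * s) * dist u v)))) :=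
              mul_le_mul_of_nonneg_left hgd hker
          _ = K / G * dist u v * ((↑t - s) ^ (γ - 1) * Real.exp (lam * s)) := by
              rw [hKdef]; ring
    have hfinal : Real.exp (-(lam * ↑t)) *
        ∫ s in (0:ℝ)..(t:ℝ), (K / G * dist u v) * ((↑t - s) ^ (γ - 1) * Real.exp (lam * s))
        ≤ 2⁻¹ * dist u v := by
      rw [intervalIntegral.integral_const_mul]
      have hstep : Real.exp (-(lam * ↑t)) *
          ∫ s in (0:ℝ)..(t:ℝ), ((↑t - s) ^ (γ - 1) * Real.exp (lam * s))
          = ∫ s in (0:ℝ)..(t:ℝ), ((↑t - s) ^ (γ - 1) * Real.exp (lam * (s - ↑t))) := by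
        rw [← intervalIntegral.integral_const_mul]
        refine intervalIntegral.integral_congr fun s _ => ?_
        rw [show lam * (s - ↑t) = lam * s + -(lam * ↑t) by ring, Real.exp_add]
        ring
      calc Real.exp (-(lam * ↑t)) * (K / G * dist u v *
            ∫ s in (0:ℝ)..(t:ℝ), ((↑t - s) ^ (γ - 1) * Real.exp (lam * s)))
          = K / G * dist u v * (Real.exp (-(lam * ↑t)) *
            ∫ s in (0:ℝ)..(t:ℝ), ((↑t - s) ^ (γ - 1) * Real.exp (lam * s))) := by ring
        _ = K / G * dist u v *
            ∫ s in (0:ℝ)..(t:ℝ), ((↑t - s) ^ (γ - 1) * Real.exp (lam * (s - ↑t))) := by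
            rw [hstep]
        _ ≤ K / G * dist u v * (G / lam ^ γ) := by
            refine mul_le_mul_of_nonneg_left (exp_ker_int hγ0 hlam ht₀.1) (by positivity)
        _ = K * dist u v / (2 * K + 1) := by
            rw [hlamγ]; field_simp
        _ ≤ 2⁻¹ * dist u v := by
            rw [div_le_iff₀ (by linarith)]
            nlinarith [dist_nonneg (x := u) (y := v), hK0]
    calc Real.exp (-(lam * ↑t)) *
          ‖∫ s in (0:ℝ)..(t:ℝ), ((↑t - s) ^ (γ - 1) • g u s - (↑t - s) ^ (γ - 1) • g v s)‖
        ≤ Real.exp (-(lam * ↑t)) *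
          ∫ s in (0:ℝ)..(t:ℝ), (K / G * dist u v) * ((↑t - s) ^ (γ - 1) * Real.exp (lam * s)) :=
          mul_le_mul_of_nonneg_left hb (Real.exp_pos _).le
      _ ≤ 2⁻¹ * dist u v := hfinal
  have hCW : ContractingWith (1/2 : NNReal) Φ := by
    constructor
    · rw [← NNReal.coe_lt_coe]; norm_num
    · refine LipschitzWith.of_dist_le_mul fun u v => ?_
      rw [show ((1/2 : NNReal) : ℝ) = 2⁻¹ by norm_num]
      exact hΦdist u v
  set uu : C(Set.Icc (0:ℝ) T, Vec n) := ContractingWith.fixedPoint Φ hCW with huudef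
  have hufix : Function.IsFixedPt Φ uu := ContractingWith.fixedPoint_isFixedPt hCW
  refine ⟨fun t => Real.exp (lam * t) • uu (projIcc 0 T hT' t), ⟨?_, ?_⟩, ?_⟩
  · exact ((Real.continuous_exp.comp (continuous_const.mul continuous_id)).smul
      (uu.continuous.comp continuous_projIcc)).continuousOn
  · intro t ht
    have h1 : uu ⟨t, ht⟩ = Real.exp (-(lam * t)) •
        ∫ s in (0:ℝ)..t, ((t - s) ^ (γ - 1)) • g uu s := by
      conv_lhs => rw [← hufix]
      rfl
    calc Real.exp (lam * t) • uu (projIcc 0 T hT' t)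
        = Real.exp (lam * t) • uu ⟨t, ht⟩ := by rw [projIcc_of_mem hT' ht]
      _ = ∫ s in (0:ℝ)..t, ((t - s) ^ (γ - 1)) • g uu s := by
          rw [h1, smul_smul, ← Real.exp_add, add_neg_cancel, Real.exp_zero, one_smul]
      _ = ∫ s in (0:ℝ)..t, ((t - s) ^ (γ - 1) / G) •
            f' (mv (a s) (y s) + ℓ s)
              (mv (a s) (Real.exp (lam * s) • uu (projIcc 0 T hT' s))
                + mv (δa s) (y s) + δℓ s) := by
          refine intervalIntegral.integral_congr fun s _ => ?_
          rw [hgdef]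
          simp only
          rw [smul_smul, div_eq_mul_inv]
  · rintro δz ⟨hδzc, hδze⟩ t ht
    set v : C(Set.Icc (0:ℝ) T, Vec n) :=
      ⟨fun t => Real.exp (-(lam * ↑t)) • δz ↑t,
        (Real.continuous_exp.comp (continuous_const.mul continuous_subtype_val).neg).smul
          (ContinuousOn.restrict hδzc)⟩ with hvdef
    have hvfix : Function.IsFixedPt Φ v := by
      refine ContinuousMap.ext fun t => ?_
      show Real.exp (-(lam * ↑t)) •
          (∫ s in (0:ℝ)..(t:ℝ), ((↑t - s) ^ (γ - 1)) • g v s) = Real.exp (-(lam * ↑t)) • δz ↑t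
      congr 1
      have hI : (∫ s in (0:ℝ)..(t:ℝ), ((↑t - s) ^ (γ - 1)) • g v s)
          = ∫ s in (0:ℝ)..(t:ℝ), ((↑t - s) ^ (γ - 1) / G) •
              f' (mv (a s) (y s) + ℓ s)
                (mv (a s) (δz s) + mv (δa s) (y s) + δℓ s) := by
        refine intervalIntegral.integral_congr fun s hs => ?_
        rw [uIcc_of_le t.2.1] at hs
        have hsT : s ∈ Icc (0:ℝ) T := ⟨hs.1, hs.2.trans t.2.2⟩
        rw [hgdef]
        simp only
        rw [projIcc_of_mem hT' hsT]
        have hv : v ⟨s, hsT⟩ = Real.exp (-(lam * s)) • δz s := rfl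
        rw [hv, smul_smul, smul_smul, ← Real.exp_add, add_neg_cancel, Real.exp_zero, one_smul,
          div_eq_mul_inv]
      rw [hI, ← hδze ↑t t.2]
    have hveq : v = uu := ContractingWith.fixedPoint_unique hCW hvfix
    have hδzt : δz t = Real.exp (lam * t) • v ⟨t, ht⟩ := by
      rw [hvdef]
      show δz t = Real.exp (lam * t) • (Real.exp (-(lam * t)) • δz t)
      rw [smul_smul, ← Real.exp_add, add_neg_cancel, Real.exp_zero, one_smul]
    rw [hδzt, hveq]
    show Real.exp (lam * t) • uu ⟨t, ht⟩ = Real.exp (lam * t) • uu (projIcc 0 T hT' t)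
    rw [projIcc_of_mem hT' ht]
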